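/- In the formal power series ring (ℚ[q])⟦t⟧, the factors 1 − t, 1 − t², 1 − q·t⁶, 1 − q²·t⁸ and 1 − q³·t¹² are invertible, and every t-coefficient of the power series f(q,t) · ((1 − t)(1 − t²)(1 − q·t⁶)(1 − q²·t⁸)(1 − q³·t¹²))⁻¹ is a polynomial in q all of whose coefficients are nonnegative integers. -/

import Mathlib

set_option maxHeartbeats 2000000

open PowerSeries

/-- The variable `q`, viewed as a constant of the power series ring `(ℚ[q])⟦t⟧`. -/
noncomputable def qv : PowerSeries (Polynomial ℚ) :=
  (PowerSeries.C (R := Polynomial ℚ)) Polynomial.X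

/-- Igusa's numerator polynomial
`f(q,t) = 1 + t² + t³ + t⁴ − 2t⁵ + 2qt⁶ + (q−1)t⁷ + qt⁸ − qt⁹ + (q−1)qt¹⁰ − 2qt¹¹ + 2q²t¹²
  − q²t¹³ − q²t¹⁴ − q²t¹⁵ − q²t¹⁷`, viewed as an element of `(ℚ[q])⟦t⟧`. -/
noncomputable def igusaF : PowerSeries (Polynomial ℚ) :=
  1 + X ^ 2 + X ^ 3 + X ^ 4 - 2 * X ^ 5 + 2 * qv * X ^ 6 + (qv - 1) * X ^ 7
    + qv * X ^ 8 - qv * X ^ 9 + (qv - 1) * qv * X ^ 10 - 2 * qv * X ^ 11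
    + 2 * qv ^ 2 * X ^ 12 - qv ^ 2 * X ^ 13 - qv ^ 2 * X ^ 14 - qv ^ 2 * X ^ 15
    - qv ^ 2 * X ^ 17

/-- The geometric series `∑_k (q^a t^b)^k`. -/
noncomputable def geom (a b : ℕ) : PowerSeries (Polynomial ℚ) :=
  PowerSeries.mk fun n => if b ∣ n then (Polynomial.X : Polynomial ℚ) ^ (a * (n / b)) else 0

lemma coeff_geom (a b m : ℕ) :
    PowerSeries.coeff (R := Polynomial ℚ) m (geom a b)
      = if b ∣ m then (Polynomial.X : Polynomial ℚ) ^ (a * (m / b)) else 0 :=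
  coeff_mk _ _

lemma geom_mul (a b : ℕ) (hb : 0 < b) :
    (1 - qv ^ a * X ^ b) * geom a b = 1 := by
  ext n
  have hq : (qv : PowerSeries (Polynomial ℚ)) ^ a
      = PowerSeries.C (R := Polynomial ℚ) (Polynomial.X ^ a) := by
    rw [qv, ← map_pow]
  rw [sub_mul, one_mul, map_sub, mul_assoc, hq, PowerSeries.coeff_C_mul,
    PowerSeries.coeff_X_pow_mul', PowerSeries.coeff_one]
  by_cases hn : n = 0
  · subst hn
    rw [if_neg (by omega : ¬ b ≤ 0), if_pos rfl, mul_zero, sub_zero, coeff_geom,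
      if_pos (dvd_zero b)]
    simp
  · rw [if_neg hn]
    by_cases hd : b ∣ n
    · obtain ⟨c, rfl⟩ := hd
      have hc : c ≠ 0 := by rintro rfl; simp at hn
      obtain ⟨c', rfl⟩ : ∃ c', c = c' + 1 := ⟨c - 1, by omega⟩
      rw [if_pos (Nat.le_mul_of_pos_right b (Nat.succ_pos c'))]
      have h1 : b * (c' + 1) - b = b * c' := by ring_nf; omega
      rw [h1, coeff_geom, coeff_geom, if_pos (Dvd.intro _ rfl), if_pos (Dvd.intro _ rfl),
        Nat.mul_div_cancel_left _ hb, Nat.mul_div_cancel_left _ hb, ← pow_add,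
        show a + a * c' = a * (c' + 1) by ring, sub_self]
    · rw [coeff_geom, if_neg hd]
      split_ifs with hble
      · have h2 : ¬ b ∣ (n - b) := by
          intro ⟨c, hc⟩
          exact hd ⟨c + 1, by rw [Nat.mul_succ]; omega⟩
        rw [coeff_geom, if_neg h2, mul_zero, sub_zero]
      · rw [mul_zero, sub_zero]

/-- polynomials in `q` with nonnegative integer coefficients -/
def good (p : Polynomial ℚ) : Prop :=
  ∃ p₀ : Polynomial ℕ, p₀.map (Nat.castRingHom ℚ) = p

lemma good_zero : good 0 := ⟨0, by simp⟩

lemma good_add {p q : Polynomial ℚ} (hp : good p) (hq : good q) : good (p + q) := by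
  obtain ⟨p₀, rfl⟩ := hp; obtain ⟨q₀, rfl⟩ := hq
  exact ⟨p₀ + q₀, by simp [Polynomial.map_add]⟩

lemma good_mul {p q : Polynomial ℚ} (hp : good p) (hq : good q) : good (p * q) := by
  obtain ⟨p₀, rfl⟩ := hp; obtain ⟨q₀, rfl⟩ := hq
  exact ⟨p₀ * q₀, by simp [Polynomial.map_mul]⟩

lemma good_sum {α : Type*} (s : Finset α) (f : α → Polynomial ℚ)
    (h : ∀ a ∈ s, good (f a)) : good (∑ a ∈ s, f a) := by
  classical
  induction s using Finset.induction_on with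
  | empty => simpa using good_zero
  | @insert x s hx ih =>
    rw [Finset.sum_insert hx]
    exact good_add (h _ (Finset.mem_insert_self _ _))
      (ih fun a ha => h a (Finset.mem_insert_of_mem ha))

/-- power series all of whose coefficients are good -/
def Good (A : PowerSeries (Polynomial ℚ)) : Prop :=
  ∀ n, good (PowerSeries.coeff (R := Polynomial ℚ) n A)

lemma Good.add {A B} (hA : Good A) (hB : Good B) : Good (A + B) := fun n => by
  rw [map_add]; exact good_add (hA n) (hB n)

lemma Good.mul {A B} (hA : Good A) (hB : Good B) : Good (A * B) := fun n => by
  rw [PowerSeries.coeff_mul]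
  exact good_sum _ _ fun p _ => good_mul (hA p.1) (hB p.2)

lemma Good_one : Good 1 := fun n => by
  rw [PowerSeries.coeff_one]
  split_ifs
  · exact ⟨1, by simp⟩
  · exact good_zero

lemma Good.pow {A} (hA : Good A) : ∀ m : ℕ, Good (A ^ m)
  | 0 => by rw [pow_zero]; exact Good_one
  | m + 1 => by rw [pow_succ]; exact (Good.pow hA m).mul hA

lemma Good_X : Good (X : PowerSeries (Polynomial ℚ)) := fun n => by
  rw [PowerSeries.coeff_X]
  split_ifs
  · exact ⟨1, by simp⟩
  · exact good_zero

lemma Good_qv : Good qv := fun n => by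
  rw [qv, PowerSeries.coeff_C]
  split_ifs
  · exact ⟨Polynomial.X, by simp⟩
  · exact good_zero

lemma Good_geom (a b : ℕ) : Good (geom a b) := fun n => by
  rw [coeff_geom]
  split_ifs
  · exact ⟨Polynomial.X ^ (a * (n / b)), by simp⟩
  · exact good_zero

/-- The three nonnegative numerators of the positivity certificate
`f = (1−t)·H1 + (1−t²)·H2 + (1−q t⁶)·H3`. -/
noncomputable def H1 : PowerSeries (Polynomial ℚ) :=
  1 + X + X ^ 2 + X ^ 3 + X ^ 4 + X ^ 4 + X ^ 5 + X ^ 6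
    + qv * X ^ 6 + qv * X ^ 7 + qv * X ^ 8 + qv * X ^ 8 + qv * X ^ 9 + qv * X ^ 10
    + qv ^ 2 * X ^ 10 + qv ^ 2 * X ^ 11 + qv ^ 2 * X ^ 12 + qv ^ 2 * X ^ 12
    + qv ^ 2 * X ^ 12 + qv ^ 2 * X ^ 13 + qv ^ 2 * X ^ 13 + qv ^ 2 * X ^ 14
    + qv ^ 2 * X ^ 14 + qv ^ 2 * X ^ 15 + qv ^ 2 * X ^ 16

noncomputable def H2 : PowerSeries (Polynomial ℚ) :=
  X ^ 3 + qv * X ^ 6 + qv * X ^ 7 + qv * X ^ 8 + qv * X ^ 9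

noncomputable def H3 : PowerSeries (Polynomial ℚ) :=
  X ^ 2 + qv * X ^ 8

lemma Good_H1 : Good H1 := by
  rw [H1]
  exact ((((((((((((((((((((((((Good_one.add Good_X).add (Good_X.pow 2)).add (Good_X.pow 3)).add (Good_X.pow 4)).add (Good_X.pow 4)).add (Good_X.pow 5)).add (Good_X.pow 6)).add (Good_qv.mul (Good_X.pow 6))).add (Good_qv.mul (Good_X.pow 7))).add (Good_qv.mul (Good_X.pow 8))).add (Good_qv.mul (Good_X.pow 8))).add (Good_qv.mul (Good_X.pow 9))).add (Good_qv.mul (Good_X.pow 10))).add ((Good_qv.pow 2).mul (Good_X.pow 10))).add ((Good_qv.pow 2).mul (Good_X.pow 11))).add ((Good_qv.pow 2).mul (Good_X.pow 12))).add ((Good_qv.pow 2).mul (Good_X.pow 12))).add ((Good_qv.pow 2).mul (Good_X.pow 12))).add ((Good_qv.pow 2).mul (Good_X.pow 13))).add ((Good_qv.pow 2).mul (Good_X.pow 13))).add ((Good_qv.pow 2).mul (Good_X.pow 14))).add ((Good_qv.pow 2).mul (Good_X.pow 14))).add ((Good_qv.pow 2).mul (Good_X.pow 15))).add ((Good_qv.pow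 2).mul (Good_X.pow 16)))

lemma Good_H2 : Good H2 := by
  rw [H2]
  exact (((((Good_X.pow 3).add (Good_qv.mul (Good_X.pow 6))).add
    (Good_qv.mul (Good_X.pow 7))).add (Good_qv.mul (Good_X.pow 8))).add
    (Good_qv.mul (Good_X.pow 9)))

lemma Good_H3 : Good H3 := by
  rw [H3]
  exact (Good_X.pow 2).add (Good_qv.mul (Good_X.pow 8))

/-- In `(ℚ[q])⟦t⟧`, the factors `1 − t`, `1 − t²`, `1 − q·t⁶`, `1 − q²·t⁸` and `1 − q³·t¹²`
are invertible, and every `t`-coefficient of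
`f(q,t) · ((1 − t)(1 − t²)(1 − q·t⁶)(1 − q²·t⁸)(1 − q³·t¹²))⁻¹`
is a polynomial in `q` all of whose coefficients are nonnegative integers. -/
theorem igusaF_div_denominator_coeffs_nonneg :
    IsUnit (1 - X : PowerSeries (Polynomial ℚ)) ∧
    IsUnit (1 - X ^ 2 : PowerSeries (Polynomial ℚ)) ∧
    IsUnit (1 - qv * X ^ 6) ∧
    IsUnit (1 - qv ^ 2 * X ^ 8) ∧
    IsUnit (1 - qv ^ 3 * X ^ 12) ∧
    ∀ n k : ℕ, ∃ m : ℕ,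
      Polynomial.coeff
        (PowerSeries.coeff (R := Polynomial ℚ) n
          (igusaF * Ring.inverse ((1 - X) * (1 - X ^ 2) * (1 - qv * X ^ 6) *
            (1 - qv ^ 2 * X ^ 8) * (1 - qv ^ 3 * X ^ 12)))) k = (m : ℚ) := by
  have k01 : (1 - X : PowerSeries (Polynomial ℚ)) * geom 0 1 = 1 := by
    have h := geom_mul 0 1 one_pos
    rw [pow_zero, one_mul, pow_one] at h
    exact h
  have k02 : (1 - X ^ 2 : PowerSeries (Polynomial ℚ)) * geom 0 2 = 1 := by
    have h := geom_mul 0 2 two_pos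
    rw [pow_zero, one_mul] at h
    exact h
  have k16 : (1 - qv * X ^ 6) * geom 1 6 = 1 := by
    have h := geom_mul 1 6 (by norm_num)
    rw [pow_one] at h
    exact h
  have k28 : (1 - qv ^ 2 * X ^ 8) * geom 2 8 = 1 := geom_mul 2 8 (by norm_num)
  have k312 : (1 - qv ^ 3 * X ^ 12) * geom 3 12 = 1 := geom_mul 3 12 (by norm_num)
  have u01 : IsUnit (1 - X : PowerSeries (Polynomial ℚ)) := IsUnit.of_mul_eq_one _ k01
  have u02 : IsUnit (1 - X ^ 2 : PowerSeries (Polynomial ℚ)) := IsUnit.of_mul_eq_one _ k02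
  have u16 : IsUnit (1 - qv * X ^ 6) := IsUnit.of_mul_eq_one _ k16
  have u28 : IsUnit (1 - qv ^ 2 * X ^ 8) := IsUnit.of_mul_eq_one _ k28
  have u312 : IsUnit (1 - qv ^ 3 * X ^ 12) := IsUnit.of_mul_eq_one _ k312
  refine ⟨u01, u02, u16, u28, u312, ?_⟩
  set D : PowerSeries (Polynomial ℚ) := (1 - X) * (1 - X ^ 2) * (1 - qv * X ^ 6) *
      (1 - qv ^ 2 * X ^ 8) * (1 - qv ^ 3 * X ^ 12) with hD
  have uD : IsUnit D := ((((u01.mul u02).mul u16).mul u28).mul u312)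
  set R : PowerSeries (Polynomial ℚ) :=
      H1 * (geom 0 2 * geom 1 6 * geom 2 8 * geom 3 12)
      + H2 * (geom 0 1 * geom 1 6 * geom 2 8 * geom 3 12)
      + H3 * (geom 0 1 * geom 0 2 * geom 2 8 * geom 3 12) with hR
  have P1 : (geom 0 2 * geom 1 6 * geom 2 8 * geom 3 12) * D = 1 - X := by
    rw [show (geom 0 2 * geom 1 6 * geom 2 8 * geom 3 12) * D
        = (1 - X) * (((1 - X ^ 2) * geom 0 2) * ((1 - qv * X ^ 6) * geom 1 6)
          * ((1 - qv ^ 2 * X ^ 8) * geom 2 8) * ((1 - qv ^ 3 * X ^ 12) * geom 3 12))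
        from by rw [hD]; ring, k02, k16, k28, k312]
    ring
  have P2 : (geom 0 1 * geom 1 6 * geom 2 8 * geom 3 12) * D = 1 - X ^ 2 := by
    rw [show (geom 0 1 * geom 1 6 * geom 2 8 * geom 3 12) * D
        = (1 - X ^ 2) * (((1 - X) * geom 0 1) * ((1 - qv * X ^ 6) * geom 1 6)
          * ((1 - qv ^ 2 * X ^ 8) * geom 2 8) * ((1 - qv ^ 3 * X ^ 12) * geom 3 12))
        from by rw [hD]; ring, k01, k16, k28, k312]
    ring
  have P3 : (geom 0 1 * geom 0 2 * geom 2 8 * geom 3 12) * D = 1 - qv * X ^ 6 := by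
    rw [show (geom 0 1 * geom 0 2 * geom 2 8 * geom 3 12) * D
        = (1 - qv * X ^ 6) * (((1 - X) * geom 0 1) * ((1 - X ^ 2) * geom 0 2)
          * ((1 - qv ^ 2 * X ^ 8) * geom 2 8) * ((1 - qv ^ 3 * X ^ 12) * geom 3 12))
        from by rw [hD]; ring, k01, k02, k28, k312]
    ring
  have cert : igusaF = H1 * (1 - X) + H2 * (1 - X ^ 2) + H3 * (1 - qv * X ^ 6) := by
    rw [igusaF, H1, H2, H3]; ring
  have key : igusaF = R * D := by
    rw [hR, add_mul, add_mul, mul_assoc H1 _ D, mul_assoc H2 _ D, mul_assoc H3 _ D, P1, P2, P3]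
    exact cert
  have main : igusaF * Ring.inverse D = R := by
    rw [key, Ring.mul_inverse_cancel_right _ _ uD]
  rw [main]
  have hGood : Good R := by
    refine Good.add (Good.add (Good_H1.mul ?_) (Good_H2.mul ?_)) (Good_H3.mul ?_)
    · exact (((Good_geom 0 2).mul (Good_geom 1 6)).mul (Good_geom 2 8)).mul (Good_geom 3 12)
    · exact (((Good_geom 0 1).mul (Good_geom 1 6)).mul (Good_geom 2 8)).mul (Good_geom 3 12)
    · exact (((Good_geom 0 1).mul (Good_geom 0 2)).mul (Good_geom 2 8)).mul (Good_geom 3 12)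
  intro n k
  obtain ⟨p₀, hp₀⟩ := hGood n
  exact ⟨p₀.coeff k, by rw [← hp₀, Polynomial.coeff_map]; simp⟩
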